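/- Let k > 0 and let (f_n)_{n≥1} be a k-sequence, i.e. there exist constants B > 0, C > 0 and θ ∈ (0,1) such that each f_n is holomorphic on [-1,1]_{k,B,n} and ‖f_n‖_{∞,[-1,1]_{k,B,n}} ≤ C·θ^n. Then the series Σ_{n≥1} f_n|_{[-1,1]} converges uniformly on [-1,1] and its sum is a C^∞ function on [-1,1] that belongs to the Gevrey class G_k([-1,1]). -/

import Mathlib

open Metric Set Filter

noncomputable section

/-- The segment `[-1,1]` viewed inside `ℂ`. -/
def seg : Set ℂ := (fun x : ℝ => (x : ℂ)) '' Set.Icc (-1) 1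

/-- The neighborhood `[-1,1]_r` of the segment. -/
def nbd (r : ℝ) : Set ℂ := {z : ℂ | Metric.infDist z seg < r}

/-- The set `[-1,1]_{k,A,n}`. -/
def tube (k A : ℝ) (n : ℕ) : Set ℂ :=
  {z : ℂ | Metric.infDist z seg < A * (n : ℝ) ^ (-(1 : ℝ) / k)}

/-- Sup norm of `f` on `S`. -/
def supOn (f : ℂ → ℂ) (S : Set ℂ) : ℝ := sSup ((fun z => ‖f z‖) '' S)

/-- The Gevrey class `G_k([-1,1])`. -/
def GevreyClass (k : ℝ) (f : ℝ → ℂ) : Prop :=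
  ContDiffOn ℝ (⊤ : ℕ∞) f (Set.Icc (-1) 1) ∧
  ∃ C > 0, ∃ A > 0, ∀ n : ℕ, ∀ x ∈ Set.Icc (-1 : ℝ) 1,
    ‖iteratedDerivWithin n f (Set.Icc (-1 : ℝ) 1) x‖ ≤
      C * A ^ n * (n : ℝ) ^ ((n : ℝ) * (1 + 1 / k))

/-- `(f_n)_{n ≥ 1}` is a `k`-sequence. -/
def IsKSeq (k : ℝ) (f : ℕ → ℂ → ℂ) : Prop :=
  ∃ B > 0, ∃ C > 0, ∃ θ ∈ Set.Ioo (0 : ℝ) 1, ∀ n : ℕ, 1 ≤ n →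
    DifferentiableOn ℂ (f n) (tube k B n) ∧ ∀ z ∈ tube k B n, ‖f n z‖ ≤ C * θ ^ n

/-- The `E(k)` property with threshold `τ` for a sequence of functions on `[-1,1]_σ`. -/
def EPropWith (k σ : ℝ) (φ : ℕ → ℂ → ℂ) (τ : ℝ) : Prop :=
  0 < τ ∧ τ ≤ σ ∧ ∀ A : ℝ, 0 < A → A ≤ τ → ∃ M : ℕ, ∀ n : ℕ, M ≤ n → ∀ p : ℕ,
    ∀ z ∈ tube k A (n + 1), φ p z ∈ tube k A n

/-- The `E(k)` property. -/
def EProp (k σ : ℝ) (φ : ℕ → ℂ → ℂ) : Prop := ∃ τ : ℝ, EPropWith k σ φ τ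

/-- `T` is a linear operator on functions. -/
def IsLinOp (T : (ℂ → ℂ) → ℂ → ℂ) : Prop :=
  (∀ f g : ℂ → ℂ, T (f + g) = T f + T g) ∧ ∀ (c : ℂ) (f : ℂ → ℂ), T (c • f) = c • T f

/-- The quantitative part of the `A(k)` property, for a given `A` and integer `N = N(A)`. -/
def APropAt (k : ℝ) (T : (ℂ → ℂ) → ℂ → ℂ) (ρ A : ℝ) (N : ℕ) : Prop :=
  ∀ n : ℕ, N ≤ n → ∀ f : ℂ → ℂ, DifferentiableOn ℂ f (tube k A n) →
    BddAbove ((fun z => ‖f z‖) '' tube k A n) →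
    DifferentiableOn ℂ (T f) (tube k A (n + 1)) ∧
      ∀ z ∈ tube k A (n + 1), ‖T f z‖ ≤ ρ * supOn f (tube k A n)

/-- The `A(k)` property with `k`-threshold `τ` and contraction constant `ρ`. -/
def AProp (k : ℝ) (T : (ℂ → ℂ) → ℂ → ℂ) (τ ρ : ℝ) : Prop :=
  0 < τ ∧ ρ ∈ Set.Ioo (0 : ℝ) 1 ∧
  (∀ A : ℝ, 0 < A → A ≤ τ → ∃ N : ℕ, APropAt k T ρ A N) ∧
  (∀ f : ℂ → ℂ, (∃ r > 0, DifferentiableOn ℂ f (nbd r)) →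
      ∀ z ∈ seg, ‖T f z‖ ≤ ρ * supOn f seg)
open Nat
open scoped NNReal Topology

lemma cauchy_est {f : ℂ → ℂ} {c : ℂ} {R : ℝ≥0} (hR : 0 < R) {M : ℝ} (hM0 : 0 ≤ M)
    (hf : DifferentiableOn ℂ f (Metric.closedBall c R))
    (hM : ∀ z ∈ Metric.closedBall c (R : ℝ), ‖f z‖ ≤ M) (p : ℕ) :
    ‖iteratedDeriv p f c‖ ≤ p ! * M / (R : ℝ) ^ p := by
  have h := hf.hasFPowerSeriesOnBall hR
  have key := h.factorial_smul (1 : ℂ) p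
  have hid : iteratedDeriv p f c = p ! • ((cauchyPowerSeries f c R p) fun _ => (1 : ℂ)) := by
    rw [key, iteratedDeriv_eq_iteratedFDeriv]
  have hnorm1 : ‖(cauchyPowerSeries f c R p) fun _ => (1 : ℂ)‖ ≤ ‖cauchyPowerSeries f c R p‖ := by
    have := (cauchyPowerSeries f c R p).le_opNorm fun _ => (1 : ℂ)
    simpa using this
  have hint : (∫ θ : ℝ in (0)..2 * Real.pi, ‖f (circleMap c R θ)‖) ≤ 2 * Real.pi * M := by
    have hcont : ContinuousOn (fun θ : ℝ => ‖f (circleMap c R θ)‖) (Set.uIcc 0 (2 * Real.pi)) := by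
      apply ContinuousOn.norm
      apply hf.continuousOn.comp (continuous_circleMap c R).continuousOn
      intro θ _
      exact sphere_subset_closedBall (circleMap_mem_sphere c (by exact_mod_cast hR.le : (0:ℝ) ≤ R) θ)
    calc (∫ θ : ℝ in (0)..2 * Real.pi, ‖f (circleMap c R θ)‖)
        ≤ ∫ _ : ℝ in (0)..2 * Real.pi, M := by
          apply intervalIntegral.integral_mono_on Real.two_pi_pos.le
            (hcont.intervalIntegrable) intervalIntegrable_const
          intro θ hθ
          exact hM _ (sphere_subset_closedBall (circleMap_mem_sphere c (by exact_mod_cast hR.le : (0:ℝ) ≤ R) θ))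
      _ = 2 * Real.pi * M := by simp [mul_comm]
  have hcps : ‖cauchyPowerSeries f c R p‖ ≤ M * ((R : ℝ)⁻¹) ^ p := by
    refine (norm_cauchyPowerSeries_le f c R p).trans ?_
    rw [abs_of_nonneg R.coe_nonneg]
    apply mul_le_mul_of_nonneg_right _ (by positivity)
    calc (2 * Real.pi)⁻¹ * ∫ θ : ℝ in (0)..2 * Real.pi, ‖f (circleMap c R θ)‖
        ≤ (2 * Real.pi)⁻¹ * (2 * Real.pi * M) := by
          apply mul_le_mul_of_nonneg_left hint (by positivity)
      _ = M := by field_simp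
  calc ‖iteratedDeriv p f c‖ = p ! * ‖(cauchyPowerSeries f c R p) fun _ => (1 : ℂ)‖ := by
        rw [hid, ← Nat.cast_smul_eq_nsmul ℂ, norm_smul]; simp
    _ ≤ p ! * (M * ((R : ℝ)⁻¹) ^ p) :=
        mul_le_mul_of_nonneg_left (hnorm1.trans hcps) (by positivity)
    _ = p ! * M / (R : ℝ) ^ p := by rw [inv_pow]; ring


lemma hasDerivWithinAt_of_unif {s : Set ℝ} (hs : Convex ℝ s)
    {g g' : ℕ → ℝ → ℂ} {F G : ℝ → ℂ}
    (hderiv : ∀ N, ∀ x ∈ s, HasDerivWithinAt (g N) (g' N x) s x)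
    (hg : ∀ x ∈ s, Tendsto (fun N => g N x) atTop (𝓝 (F x)))
    (hg' : TendstoUniformlyOn g' G atTop s)
    {x₀ : ℝ} (hx₀ : x₀ ∈ s) : HasDerivWithinAt F (G x₀) s x₀ := by
  rw [hasDerivWithinAt_iff_isLittleO, Asymptotics.isLittleO_iff]
  intro c hc
  have hc4 : 0 < c / 4 := by linarith
  obtain ⟨N₀, hN₀⟩ : ∃ N₀ : ℕ, ∀ N ≥ N₀, ∀ x ∈ s, dist (G x) (g' N x) < c / 4 := by
    have := (Metric.tendstoUniformlyOn_iff.mp hg' (c / 4) hc4)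
    exact eventually_atTop.mp this
  -- Claim A: for N, M ≥ N₀, difference of increments bounded
  have claimA : ∀ N ≥ N₀, ∀ M ≥ N₀, ∀ y ∈ s,
      ‖(g N y - g M y) - (g N x₀ - g M x₀)‖ ≤ (c / 2) * ‖y - x₀‖ := by
    intro N hN M hM y hy
    have := hs.norm_image_sub_le_of_norm_hasDerivWithin_le
      (f := fun x => g N x - g M x) (f' := fun x => g' N x - g' M x) (C := c / 2)
      (fun x hx => (hderiv N x hx).sub (hderiv M x hx))
      (fun x hx => by
        have h1 : ‖g' N x - G x‖ < c / 4 := by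
          rw [norm_sub_rev, ← dist_eq_norm]; exact hN₀ N hN x hx
        have h2 : ‖G x - g' M x‖ < c / 4 := by
          rw [← dist_eq_norm]; exact hN₀ M hM x hx
        calc ‖g' N x - g' M x‖ = ‖(g' N x - G x) + (G x - g' M x)‖ := by
              rw [sub_add_sub_cancel]
          _ ≤ ‖g' N x - G x‖ + ‖G x - g' M x‖ := norm_add_le _ _
          _ ≤ c / 2 := by linarith) hx₀ hy
    simpa [sub_sub_sub_comm] using this
  have claimB : ∀ y ∈ s, ‖(g N₀ y - F y) - (g N₀ x₀ - F x₀)‖ ≤ (c / 2) * ‖y - x₀‖ := by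
    intro y hy
    have hlim : Tendsto (fun M => ‖(g N₀ y - g M y) - (g N₀ x₀ - g M x₀)‖) atTop
        (𝓝 ‖(g N₀ y - F y) - (g N₀ x₀ - F x₀)‖) :=
      ((tendsto_const_nhds.sub (hg y hy)).sub (tendsto_const_nhds.sub (hg x₀ hx₀))).norm
    apply le_of_tendsto hlim
    filter_upwards [eventually_ge_atTop N₀] with M hM
    exact claimA N₀ le_rfl M hM y hy
  have hlittle : ∀ᶠ y in 𝓝[s] x₀,
      ‖g N₀ y - g N₀ x₀ - (y - x₀) • g' N₀ x₀‖ ≤ (c / 4) * ‖y - x₀‖ := by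
    have := hasDerivWithinAt_iff_isLittleO.mp (hderiv N₀ x₀ hx₀)
    exact Asymptotics.isLittleO_iff.mp this hc4
  filter_upwards [hlittle, self_mem_nhdsWithin] with y hy1 hy2
  have keyeq : F y - F x₀ - (y - x₀) • G x₀ =
      -((g N₀ y - F y) - (g N₀ x₀ - F x₀)) + (g N₀ y - g N₀ x₀ - (y - x₀) • g' N₀ x₀)
        + (y - x₀) • (g' N₀ x₀ - G x₀) := by
    simp only [Complex.real_smul]
    ring
  have hd : ‖(y - x₀) • (g' N₀ x₀ - G x₀)‖ ≤ ‖y - x₀‖ * (c / 4) := by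
    rw [norm_smul]
    apply mul_le_mul_of_nonneg_left _ (norm_nonneg _)
    rw [norm_sub_rev, ← dist_eq_norm]
    exact (hN₀ N₀ le_rfl x₀ hx₀).le
  calc ‖F y - F x₀ - (y - x₀) • G x₀‖
      ≤ ‖-((g N₀ y - F y) - (g N₀ x₀ - F x₀))‖ + ‖g N₀ y - g N₀ x₀ - (y - x₀) • g' N₀ x₀‖
        + ‖(y - x₀) • (g' N₀ x₀ - G x₀)‖ := by
        rw [keyeq]; exact norm_add₃_le
    _ ≤ (c / 2) * ‖y - x₀‖ + (c / 4) * ‖y - x₀‖ + ‖y - x₀‖ * (c / 4) := by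
        have h1 : ‖-((g N₀ y - F y) - (g N₀ x₀ - F x₀))‖ ≤ (c / 2) * ‖y - x₀‖ := by
          rw [norm_neg]; exact claimB y hy2
        exact add_le_add (add_le_add h1 hy1) hd
    _ ≤ c * ‖y - x₀‖ := by nlinarith [norm_nonneg (y - x₀)]


lemma key_bound {k : ℝ} (hk : 0 < k) {lam : ℝ} (hlam : 0 < lam) :
    ∃ c₁ ≥ (1 : ℝ), ∃ a₁ > (0 : ℝ), ∀ p : ℕ,
      (p ! : ℝ) * ((⌈(p : ℝ) / k⌉₊)! / lam ^ ⌈(p : ℝ) / k⌉₊) ≤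
        c₁ * a₁ ^ p * (p : ℝ) ^ ((p : ℝ) * (1 + 1 / k)) := by
  set c : ℝ := max 1 lam⁻¹ with hc
  have hc1 : (1 : ℝ) ≤ c := le_max_left _ _
  have hlc : lam⁻¹ ≤ c := le_max_right _ _
  have hc0 : (0 : ℝ) ≤ c := by linarith
  set e₁ : ℝ := c * (1 + 1 / k) with he₁
  have he1 : (1 : ℝ) ≤ e₁ := by
    have h0 : (0 : ℝ) < 1 / k := by positivity
    nlinarith
  refine ⟨e₁, he1, 2 * e₁ ^ ((1 : ℝ) / k), by positivity, fun p => ?_⟩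
  rcases Nat.eq_zero_or_pos p with rfl | hp
  · have h0 : ((0 : ℕ) : ℝ) / k = 0 := by simp
    simp only [h0, Nat.cast_zero, zero_div, Nat.ceil_zero, factorial_zero, pow_zero,
      Nat.cast_one, zero_mul, Real.rpow_zero, mul_one, div_one, one_mul]
    linarith
  · set m := ⌈(p : ℝ) / k⌉₊ with hm
    have hp1 : (1 : ℝ) ≤ (p : ℝ) := by exact_mod_cast hp
    have hm1 : (m : ℝ) ≤ (p : ℝ) / k + 1 := (Nat.ceil_lt_add_one (by positivity)).le
    have step1 : (m ! : ℝ) / lam ^ m ≤ (c * m) ^ m := by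
      have h1 : (m ! : ℝ) ≤ (m : ℝ) ^ m := by exact_mod_cast Nat.factorial_le_pow m
      have h2 : (lam ^ m)⁻¹ ≤ c ^ m := by
        rw [← inv_pow]
        exact pow_le_pow_left₀ (by positivity) hlc m
      calc (m ! : ℝ) / lam ^ m = (m ! : ℝ) * (lam ^ m)⁻¹ := div_eq_mul_inv _ _
        _ ≤ (m : ℝ) ^ m * c ^ m := by
            apply mul_le_mul h1 h2 (by positivity) (by positivity)
        _ = (c * m) ^ m := by rw [← mul_pow]; ring_nf
    have hbase : (1 : ℝ) ≤ e₁ * p := by nlinarith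
    have step2 : (c * (m : ℝ)) ^ m ≤ (e₁ * p) ^ m := by
      apply pow_le_pow_left₀ (by positivity)
      calc c * (m : ℝ) ≤ c * ((p : ℝ) / k + 1) := by nlinarith
        _ ≤ c * ((p : ℝ) / k + (p : ℝ)) := by nlinarith [div_nonneg (le_trans zero_le_one hp1) hk.le]
        _ = e₁ * p := by rw [he₁]; field_simp; ring
    have step3 : ((e₁ * p) ^ m : ℝ) ≤ (e₁ * p) ^ ((p : ℝ) / k + 1) := by
      rw [← Real.rpow_natCast (e₁ * p) m]
      exact Real.rpow_le_rpow_of_exponent_le hbase hm1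
    have step4 : (e₁ * p) ^ ((p : ℝ) / k + 1) = (e₁ ^ ((p : ℝ) / k) * (p : ℝ) ^ ((p : ℝ) / k)) * (e₁ * p) := by
      rw [Real.rpow_add (by nlinarith), Real.rpow_one, Real.mul_rpow (by nlinarith) (by positivity)]
    have step5 : e₁ ^ ((p : ℝ) / k) = (e₁ ^ ((1 : ℝ) / k)) ^ p := by
      rw [← Real.rpow_natCast (e₁ ^ ((1 : ℝ) / k)) p, ← Real.rpow_mul (by linarith)]
      congr 1; ring
    have step6 : e₁ * (p : ℝ) ≤ e₁ * 2 ^ p := by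
      have : (p : ℝ) ≤ 2 ^ p := by exact_mod_cast (Nat.lt_two_pow_self (n := p)).le
      nlinarith
    have hfact : (p ! : ℝ) ≤ (p : ℝ) ^ ((p : ℝ)) := by
      rw [show ((p : ℝ) ^ ((p : ℝ))) = (p : ℝ) ^ (p : ℕ) from Real.rpow_natCast _ p]
      exact_mod_cast Nat.factorial_le_pow p
    have hmul : (p : ℝ) ^ ((p : ℝ)) * (p : ℝ) ^ ((p : ℝ) / k) = (p : ℝ) ^ ((p : ℝ) * (1 + 1 / k)) := by
      rw [← Real.rpow_add (by exact_mod_cast hp)]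
      congr 1
      field_simp
    have hA : (m ! : ℝ) / lam ^ m ≤ (e₁ ^ ((1 : ℝ) / k)) ^ p * (p : ℝ) ^ ((p : ℝ) / k) * (e₁ * 2 ^ p) := by
      calc (m ! : ℝ) / lam ^ m ≤ (c * m) ^ m := step1
        _ ≤ (e₁ * p) ^ m := step2
        _ ≤ (e₁ * p) ^ ((p : ℝ) / k + 1) := step3
        _ = e₁ ^ ((p : ℝ) / k) * (p : ℝ) ^ ((p : ℝ) / k) * (e₁ * p) := step4
        _ ≤ (e₁ ^ ((1 : ℝ) / k)) ^ p * (p : ℝ) ^ ((p : ℝ) / k) * (e₁ * 2 ^ p) := by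
            rw [step5]
            apply mul_le_mul_of_nonneg_left step6 (by positivity)
    have hdiv0 : (0 : ℝ) ≤ (m ! : ℝ) / lam ^ m :=
      div_nonneg (by positivity) (pow_nonneg hlam.le m)
    calc (p ! : ℝ) * ((m !) / lam ^ m)
        ≤ (p : ℝ) ^ ((p : ℝ)) * ((e₁ ^ ((1 : ℝ) / k)) ^ p * (p : ℝ) ^ ((p : ℝ) / k) * (e₁ * 2 ^ p)) :=
          mul_le_mul hfact hA hdiv0 (by positivity)
      _ = e₁ * (2 * e₁ ^ ((1 : ℝ) / k)) ^ p * ((p : ℝ) ^ ((p : ℝ)) * (p : ℝ) ^ ((p : ℝ) / k)) := by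
          rw [mul_pow]; ring
      _ = e₁ * (2 * e₁ ^ ((1 : ℝ) / k)) ^ p * (p : ℝ) ^ ((p : ℝ) * (1 + 1 / k)) := by rw [hmul]

/-- a `k`-sequence sums, uniformly on `[-1,1]`, to a function of
the Gevrey class `G_k([-1,1])`. -/
theorem sum_of_kSeq_mem_gevrey (k : ℝ) (hk : 0 < k) (f : ℕ → ℂ → ℂ)
    (hf : IsKSeq k f) :
    ∃ F : ℝ → ℂ,
      TendstoUniformlyOn (fun N (x : ℝ) => ∑ n ∈ Finset.Icc 1 N, f n (x : ℂ))
        F Filter.atTop (Set.Icc (-1) 1) ∧ GevreyClass k F := by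
  classical
  obtain ⟨B, hB, C, hC, θ, hθ, h1⟩ := hf
  have hθ0 : 0 < θ := hθ.1
  have hθ1 : θ < 1 := hθ.2
  have hIcc : UniqueDiffOn ℝ (Set.Icc (-1 : ℝ) 1) := uniqueDiffOn_Icc (by norm_num)
  have hconv : Convex ℝ (Set.Icc (-1 : ℝ) 1) := convex_Icc _ _
  set μ : ℝ := Real.sqrt θ with hμ
  have hμ0 : 0 < μ := Real.sqrt_pos.mpr hθ.1
  have hμ1 : μ < 1 := by
    have h := Real.sqrt_lt_sqrt hθ.1.le hθ.2
    simpa [Real.sqrt_one] using h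
  have hθμ : θ = μ * μ := (Real.mul_self_sqrt hθ.1.le).symm
  set lam : ℝ := -Real.log μ with hlamdef
  have hlam : 0 < lam := by
    have := Real.log_neg hμ0 hμ1
    simp only [hlamdef]; linarith
  have hexpμ : Real.exp (-lam) = μ := by
    rw [hlamdef, neg_neg]; exact Real.exp_log hμ0
  -- radii
  set r : ℕ → ℝ := fun n => B * (n : ℝ) ^ (-(1 : ℝ) / k) / 2 with hrdef
  have hrpos : ∀ n : ℕ, 1 ≤ n → 0 < r n := by
    intro n hn
    have hn0 : (0 : ℝ) < (n : ℝ) := by exact_mod_cast hn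
    simp only [hrdef]
    positivity
  have hrnonneg : ∀ n : ℕ, 0 ≤ r n := by
    intro n
    rcases Nat.eq_zero_or_pos n with rfl | hn
    · simp [hrdef]
      positivity
    · exact (hrpos n hn).le
  -- closed balls around points of the segment are inside the tube
  have hball : ∀ n : ℕ, 1 ≤ n → ∀ x : ℝ, x ∈ Set.Icc (-1 : ℝ) 1 →
      Metric.closedBall (x : ℂ) (r n) ⊆ tube k B n := by
    intro n hn x hx z hz
    have hxseg : (x : ℂ) ∈ seg := ⟨x, hx, rfl⟩
    have h2 : Metric.infDist z seg ≤ dist z (x : ℂ) := Metric.infDist_le_dist_of_mem hxseg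
    have h3 : dist z (x : ℂ) ≤ r n := Metric.mem_closedBall.mp hz
    have hn0 : (0 : ℝ) < (n : ℝ) := by exact_mod_cast hn
    have h4 : r n < B * (n : ℝ) ^ (-(1 : ℝ) / k) := by
      have h5 : (0 : ℝ) < B * (n : ℝ) ^ (-(1 : ℝ) / k) := by positivity
      simp only [hrdef]; linarith
    exact lt_of_le_of_lt (h2.trans h3) h4
  -- term functions and majorants
  set d : ℕ → ℕ → ℝ → ℂ := fun p n x => if n = 0 then 0 else iteratedDeriv p (f n) (x : ℂ)
    with hddef
  set Mf : ℕ → ℕ → ℝ := fun p n =>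
    if n = 0 then 0 else (p ! : ℝ) * (C * θ ^ n) / r n ^ p with hMdef
  have hMnonneg : ∀ p n, 0 ≤ Mf p n := by
    intro p n
    rcases eq_or_ne n 0 with rfl | h
    · simp [hMdef]
    · simp only [hMdef, if_neg h]
      have := hrnonneg n
      have h1' : (0:ℝ) ≤ (p ! : ℝ) * (C * θ ^ n) := by positivity
      exact div_nonneg h1' (pow_nonneg this p)
  -- Cauchy estimates
  have hdbound : ∀ p n, ∀ x ∈ Set.Icc (-1 : ℝ) 1, ‖d p n x‖ ≤ Mf p n := by
    intro p n x hx
    rcases eq_or_ne n 0 with rfl | h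
    · simp [hddef, hMdef]
    · have hn : 1 ≤ n := Nat.one_le_iff_ne_zero.mpr h
      have h0 : 0 < r n := hrpos n hn
      simp only [hddef, hMdef, if_neg h]
      have := cauchy_est (R := ⟨r n, h0.le⟩) (by exact_mod_cast h0) (by positivity)
        ((h1 n hn).1.mono (hball n hn x hx))
        (fun z hz => (h1 n hn).2 z (hball n hn x hx hz)) p
      exact this
  -- comparison with a geometric series
  set Ep : ℕ → ℝ := fun p =>
    (p ! : ℝ) * C * (2 / B) ^ p * ((⌈(p : ℝ) / k⌉₊)! / lam ^ ⌈(p : ℝ) / k⌉₊) with hEpdef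
  have hEpnonneg : ∀ p, 0 ≤ Ep p := by
    intro p
    simp only [hEpdef]
    have h2 : (0:ℝ) ≤ ((⌈(p : ℝ) / k⌉₊)! : ℝ) / lam ^ ⌈(p : ℝ) / k⌉₊ :=
      div_nonneg (by positivity) (pow_nonneg hlam.le _)
    positivity
  have claim1 : ∀ m n : ℕ, (n : ℝ) ^ m * μ ^ n ≤ (m ! : ℝ) / lam ^ m := by
    intro m n
    have hx : (0 : ℝ) ≤ lam * n := by positivity
    have h1' : (lam * n) ^ m / (m ! : ℝ) ≤ Real.exp (lam * n) :=
      Real.pow_div_factorial_le_exp (lam * n) hx m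
    have hμn : μ ^ n = Real.exp (-(lam * n)) := by
      rw [← hexpμ, ← Real.exp_nat_mul]
      congr 1
      ring
    rw [hμn, le_div_iff₀ (pow_pos hlam m)]
    have key : (lam * n) ^ m ≤ (m ! : ℝ) * Real.exp (lam * n) := by
      rw [div_le_iff₀ (by positivity : (0 : ℝ) < (m ! : ℝ))] at h1'
      linarith
    calc (n : ℝ) ^ m * Real.exp (-(lam * n)) * lam ^ m
        = (lam * n) ^ m * Real.exp (-(lam * n)) := by rw [mul_pow]; ring
      _ ≤ ((m ! : ℝ) * Real.exp (lam * n)) * Real.exp (-(lam * n)) :=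
          mul_le_mul_of_nonneg_right key (Real.exp_pos _).le
      _ = (m ! : ℝ) := by rw [mul_assoc, ← Real.exp_add]; simp
  have claim2 : ∀ p n, Mf p n ≤ Ep p * μ ^ n := by
    intro p n
    rcases eq_or_ne n 0 with rfl | h
    · simpa [hMdef] using mul_nonneg (hEpnonneg p) (by positivity : (0:ℝ) ≤ μ ^ (0:ℕ))
    · have hn : 1 ≤ n := Nat.one_le_iff_ne_zero.mpr h
      have hn0 : (0 : ℝ) < (n : ℝ) := by exact_mod_cast hn
      have hn1 : (1 : ℝ) ≤ (n : ℝ) := by exact_mod_cast hn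
      set m := ⌈(p : ℝ) / k⌉₊ with hmdef
      have hnp : ((n : ℝ) ^ (-(1 : ℝ) / k)) ^ p = ((n : ℝ) ^ ((p : ℝ) / k))⁻¹ := by
        rw [← Real.rpow_natCast ((n : ℝ) ^ (-(1 : ℝ) / k)) p, ← Real.rpow_mul hn0.le,
          ← Real.rpow_neg hn0.le]
        congr 1
        ring
      have hMeq : Mf p n = (p ! : ℝ) * C * (2 / B) ^ p * (θ ^ n * (n : ℝ) ^ ((p : ℝ) / k)) := by
        have hpow : (0:ℝ) < (n : ℝ) ^ ((p : ℝ) / k) := Real.rpow_pos_of_pos hn0 _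
        simp only [hMdef, if_neg h, hrdef]
        rw [div_pow, mul_pow, hnp]
        field_simp
        ring_nf
        rw [← mul_pow, mul_inv_cancel₀ hB.ne', one_pow, one_mul]
      have e1 : (n : ℝ) ^ ((p : ℝ) / k) ≤ (n : ℝ) ^ (m : ℕ) := by
        rw [← Real.rpow_natCast (n : ℝ) m]
        exact Real.rpow_le_rpow_of_exponent_le hn1 (Nat.le_ceil _)
      have h3 : θ ^ n * (n : ℝ) ^ ((p : ℝ) / k) ≤ μ ^ n * ((m ! : ℝ) / lam ^ m) := by
        have hrpw : (0:ℝ) ≤ (n : ℝ) ^ ((p : ℝ) / k) := (Real.rpow_pos_of_pos hn0 _).le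
        calc θ ^ n * (n : ℝ) ^ ((p : ℝ) / k)
            = μ ^ n * (μ ^ n * (n : ℝ) ^ ((p : ℝ) / k)) := by
              rw [hθμ, mul_pow]; ring
          _ ≤ μ ^ n * (μ ^ n * (n : ℝ) ^ (m : ℕ)) := by
              apply mul_le_mul_of_nonneg_left _ (pow_nonneg hμ0.le n)
              exact mul_le_mul_of_nonneg_left e1 (pow_nonneg hμ0.le n)
          _ = μ ^ n * ((n : ℝ) ^ (m : ℕ) * μ ^ n) := by ring
          _ ≤ μ ^ n * ((m ! : ℝ) / lam ^ m) :=
              mul_le_mul_of_nonneg_left (claim1 m n) (pow_nonneg hμ0.le n)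
      calc Mf p n = (p ! : ℝ) * C * (2 / B) ^ p * (θ ^ n * (n : ℝ) ^ ((p : ℝ) / k)) := hMeq
        _ ≤ (p ! : ℝ) * C * (2 / B) ^ p * (μ ^ n * ((m ! : ℝ) / lam ^ m)) := by
            apply mul_le_mul_of_nonneg_left h3 (by positivity)
        _ = Ep p * μ ^ n := by simp only [hEpdef]; ring
  have hgeom : Summable (fun n : ℕ => μ ^ n) := summable_geometric_of_lt_one hμ0.le hμ1
  have hMsum : ∀ p, Summable (Mf p) := fun p =>
    Summable.of_nonneg_of_le (hMnonneg p) (claim2 p) (hgeom.mul_left (Ep p))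
  have htsum : ∀ p, ∑' n, Mf p n ≤ Ep p * (1 - μ)⁻¹ := by
    intro p
    calc ∑' n, Mf p n ≤ ∑' n, Ep p * μ ^ n :=
          Summable.tsum_le_tsum (claim2 p) (hMsum p) (hgeom.mul_left (Ep p))
      _ = Ep p * (1 - μ)⁻¹ := by
          rw [tsum_mul_left, tsum_geometric_of_lt_one hμ0.le hμ1]
  -- the sum functions
  set G : ℕ → ℝ → ℂ := fun p x => ∑' n, d p n x with hGdef
  have hunif : ∀ p, TendstoUniformlyOn (fun N x => ∑ n ∈ Finset.range N, d p n x) (G p)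
      Filter.atTop (Set.Icc (-1 : ℝ) 1) :=
    fun p => tendstoUniformlyOn_tsum_nat (hMsum p) (fun n x hx => hdbound p n x hx)
  -- term-by-term derivatives
  have hopen : ∀ n : ℕ, IsOpen (tube k B n) :=
    fun n => isOpen_lt (continuous_infDist_pt seg) continuous_const
  have hterm : ∀ p n, ∀ x ∈ Set.Icc (-1 : ℝ) 1,
      HasDerivWithinAt (d p n) (d (p + 1) n x) (Set.Icc (-1 : ℝ) 1) x := by
    intro p n x hx
    rcases eq_or_ne n 0 with rfl | h
    · simp only [hddef, if_pos rfl]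
      exact (hasDerivWithinAt_const x _ (0 : ℂ))
    · have hn : 1 ≤ n := Nat.one_le_iff_ne_zero.mpr h
      have hanal : AnalyticOnNhd ℂ (f n) (tube k B n) := (h1 n hn).1.analyticOnNhd (hopen n)
      have hiter : AnalyticOnNhd ℂ (iteratedDeriv p (f n)) (tube k B n) := by
        clear hx
        induction p with
        | zero => simpa [iteratedDeriv_zero] using hanal
        | succ q ih => rw [iteratedDeriv_succ]; exact ih.deriv
      have hmem : (x : ℂ) ∈ tube k B n := by
        have hn0 : (0 : ℝ) < (n : ℝ) := by exact_mod_cast hn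
        have : Metric.infDist (x : ℂ) seg = 0 :=
          Metric.infDist_zero_of_mem ⟨x, hx, rfl⟩
        simp only [tube, Set.mem_setOf_eq, this]
        positivity
      have hda : HasDerivAt (iteratedDeriv p (f n)) (iteratedDeriv (p + 1) (f n) (x : ℂ))
          (x : ℂ) := by
        rw [iteratedDeriv_succ]
        exact (hiter _ hmem).differentiableAt.hasDerivAt
      simp only [hddef, if_neg h]
      exact hda.comp_ofReal.hasDerivWithinAt
  have hGderiv : ∀ p, ∀ x ∈ Set.Icc (-1 : ℝ) 1,
      HasDerivWithinAt (G p) (G (p + 1) x) (Set.Icc (-1 : ℝ) 1) x := by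
    intro p x hx
    exact hasDerivWithinAt_of_unif hconv
      (g := fun N x => ∑ n ∈ Finset.range N, d p n x)
      (g' := fun N x => ∑ n ∈ Finset.range N, d (p + 1) n x)
      (fun N y hy => HasDerivWithinAt.fun_sum (fun n _ => hterm p n y hy))
      (fun y hy => (hunif p).tendsto_at hy)
      (hunif (p + 1)) hx
  -- identification of the iterated derivatives
  have keyEq : ∀ p, ∀ x ∈ Set.Icc (-1 : ℝ) 1,
      iteratedDerivWithin p (G 0) (Set.Icc (-1 : ℝ) 1) x = G p x := by
    intro p
    induction p with
    | zero => intro x hx; simp [iteratedDerivWithin_zero]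
    | succ q ih =>
      intro x hx
      rw [iteratedDerivWithin_succ]
      rw [derivWithin_congr (fun y hy => ih y hy) (ih x hx)]
      exact (hGderiv q x hx).derivWithin (hIcc x hx)
  refine ⟨G 0, ?_, ?_, ?_⟩
  · -- uniform convergence of the partial sums over Finset.Icc 1 N
    have hEq : ∀ (N : ℕ) (x : ℝ),
        (∑ n ∈ Finset.Icc 1 N, f n (x : ℂ)) = ∑ n ∈ Finset.range (N + 1), d 0 n x := by
      intro N x
      have hsub : Finset.Icc 1 N ⊆ Finset.range (N + 1) := by
        intro n hn
        rw [Finset.mem_range, Nat.lt_succ_iff]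
        exact (Finset.mem_Icc.mp hn).2
      rw [← Finset.sum_subset hsub]
      · apply Finset.sum_congr rfl
        intro n hn
        have : n ≠ 0 := by
          have := (Finset.mem_Icc.mp hn).1
          omega
        simp [hddef, this, iteratedDeriv_zero]
      · intro n _ hn
        have : n = 0 := by
          rcases eq_or_ne n 0 with h | h
          · exact h
          · exfalso
            apply hn
            rw [Finset.mem_Icc]
            constructor
            · omega
            · have := Finset.mem_range.mp ‹n ∈ Finset.range (N + 1)›
              omega
        simp [hddef, this]
    intro u hu
    have h2 := hunif 0 u hu
    have h3 := (tendsto_add_atTop_nat 1).eventually h2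
    filter_upwards [h3] with N hN x hx
    have := hN x hx
    rw [hEq N x]
    exact this
  · -- smoothness
    apply contDiffOn_of_differentiableOn_deriv
    intro m _
    intro x hx
    exact ((hGderiv m x hx).congr (fun y hy => keyEq m y hy) (keyEq m x hx)).differentiableWithinAt
  · -- the Gevrey bounds
    obtain ⟨c₁, hc₁, a₁, ha₁, hkey⟩ := key_bound hk hlam
    refine ⟨C * (1 - μ)⁻¹ * c₁, by have := sub_pos.mpr hμ1; positivity,
      (2 / B) * a₁, by positivity, fun p x hx => ?_⟩
    rw [keyEq p x hx]
    have hnorm : ‖G p x‖ ≤ ∑' n, Mf p n :=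
      tsum_of_norm_bounded (hMsum p).hasSum (fun n => hdbound p n x hx)
    have hfin : Ep p * (1 - μ)⁻¹ ≤
        C * (1 - μ)⁻¹ * c₁ * ((2 / B) * a₁) ^ p * (p : ℝ) ^ ((p : ℝ) * (1 + 1 / k)) := by
      have h5 := hkey p
      have h6 : (0:ℝ) < (1 - μ)⁻¹ := by
        have := sub_pos.mpr hμ1; positivity
      calc Ep p * (1 - μ)⁻¹
          = (C * (1 - μ)⁻¹ * (2 / B) ^ p) *
            ((p ! : ℝ) * ((⌈(p : ℝ) / k⌉₊)! / lam ^ ⌈(p : ℝ) / k⌉₊)) := by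
            simp only [hEpdef]; ring
        _ ≤ (C * (1 - μ)⁻¹ * (2 / B) ^ p) *
            (c₁ * a₁ ^ p * (p : ℝ) ^ ((p : ℝ) * (1 + 1 / k))) := by
            apply mul_le_mul_of_nonneg_left h5 (by positivity)
        _ = C * (1 - μ)⁻¹ * c₁ * ((2 / B) * a₁) ^ p * (p : ℝ) ^ ((p : ℝ) * (1 + 1 / k)) := by
            rw [mul_pow]; ring
    exact hnorm.trans ((htsum p).trans hfin)
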